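/- Let {X_n} be random variables with P(X_n = x_n^{(1)}) = 1 - p_n and P(X_n = x_n^{(2)}) = p_n, where p_n ∈ (0,1) with p_n → 0, x_n^{(1)} → 0, x_n^{(2)} → x̄ ∈ (0,+∞], x_n^{(i)} ≥ 0. Let v_n → +∞ with (log p_n)/v_n → -c for some c ∈ (0,+∞]. Then {X_n} obeys an LDP on ℝ̄ = ℝ ∪ {+∞} with speed v_n and rate function I with I(0) = 0, I(x̄) = c, and I(x) = +∞ otherwise. -/

import Mathlib

open Filter MeasureTheory
open scoped ENNReal

/-- LDP for a sequence of two-valued random variables on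
`ℝ̄ = ℝ ∪ {+∞}` (modeled inside `EReal`). `X n` takes the value `x1 n ≥ 0`
with probability `1 - p n` and the value `x2 n ≥ 0` with probability `p n`,
`p n → 0`, `x1 n → 0`, `x2 n → x̄ ∈ (0, +∞]`, `v n → ∞`,
`log(p n)/v n → -c` with `c ∈ (0, +∞]`. The rate function is
`I 0 = 0`, `I x̄ = c`, `I = +∞` elsewhere. -/
theorem stmt_13 {Ω : Type*} [MeasurableSpace Ω]
    (μ : ℕ → Measure Ω) (hμ : ∀ n, IsProbabilityMeasure (μ n))
    (X : ℕ → Ω → EReal) (hX : ∀ n, Measurable (X n))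
    (p : ℕ → ℝ) (hp : ∀ n, p n ∈ Set.Ioo (0 : ℝ) 1)
    (x1 x2 : ℕ → ℝ) (hx1pos : ∀ n, 0 ≤ x1 n) (hx2pos : ∀ n, 0 ≤ x2 n)
    (hlaw1 : ∀ n, μ n {ω | X n ω = ((x1 n : ℝ) : EReal)} = ENNReal.ofReal (1 - p n))
    (hlaw2 : ∀ n, μ n {ω | X n ω = ((x2 n : ℝ) : EReal)} = ENNReal.ofReal (p n))
    (hp0 : Tendsto p atTop (nhds 0))
    (hx1 : Tendsto x1 atTop (nhds 0))
    (xbar : EReal) (hxbar : 0 < xbar)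
    (hx2 : Tendsto (fun n => ((x2 n : ℝ) : EReal)) atTop (nhds xbar))
    (v : ℕ → ℝ) (hv : ∀ n, 0 < v n) (hvinf : Tendsto v atTop atTop)
    (c : ℝ≥0∞) (hc : 0 < c)
    (hpc : Tendsto (fun n => ((Real.log (p n) / v n : ℝ) : EReal)) atTop
      (nhds (-(c : EReal))))
    (I : EReal → ℝ≥0∞)
    (hI : ∀ x : EReal, I x = if x = 0 then 0 else if x = xbar then c else ⊤) :
    (∀ O : Set EReal, IsOpen O →
      -((⨅ x ∈ O, I x : ℝ≥0∞) : EReal) ≤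
        liminf (fun n => (((v n)⁻¹ : ℝ) : EReal) *
          ENNReal.log (μ n (X n ⁻¹' O))) atTop) ∧
    (∀ C : Set EReal, IsClosed C →
      limsup (fun n => (((v n)⁻¹ : ℝ) : EReal) *
          ENNReal.log (μ n (X n ⁻¹' C))) atTop ≤
        -((⨅ x ∈ C, I x : ℝ≥0∞) : EReal)) := by
  classical
  have hinvnn : ∀ n, (0 : EReal) ≤ (((v n)⁻¹ : ℝ) : EReal) := fun n =>
    EReal.coe_nonneg.2 (inv_nonneg.2 (hv n).le)
  -- measurability of the atoms
  have m1 : ∀ n, MeasurableSet {ω | X n ω = ((x1 n : ℝ) : EReal)} := fun n =>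
    hX n (measurableSet_singleton _)
  have m2 : ∀ n, MeasurableSet {ω | X n ω = ((x2 n : ℝ) : EReal)} := fun n =>
    hX n (measurableSet_singleton _)
  -- eventually p n < 1/2
  have hphalf : ∀ᶠ n in atTop, p n < 1/2 := hp0.eventually_lt_const (by norm_num)
  -- eventually x1 ≠ x2 (as EReal)
  have hne : ∀ᶠ n in atTop, ((x1 n : ℝ) : EReal) ≠ ((x2 n : ℝ) : EReal) := by
    filter_upwards [hphalf] with n hn heq
    have h1 : μ n {ω | X n ω = ((x1 n : ℝ) : EReal)} = ENNReal.ofReal (p n) := by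
      rw [show {ω | X n ω = ((x1 n : ℝ) : EReal)} = {ω | X n ω = ((x2 n : ℝ) : EReal)} by
        simp only [heq]]
      exact hlaw2 n
    have h2 := (hlaw1 n).symm.trans h1
    have := (ENNReal.ofReal_eq_ofReal_iff (by linarith [(hp n).2]) (hp n).1.le).1 h2
    linarith
  -- eventually the complement of the two atoms is null
  have hnull : ∀ᶠ n in atTop,
      μ n ({ω | X n ω = ((x1 n : ℝ) : EReal)} ∪ {ω | X n ω = ((x2 n : ℝ) : EReal)})ᶜ = 0 := by
    filter_upwards [hne] with n hn
    have := hμ n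
    have hd : Disjoint {ω | X n ω = ((x1 n : ℝ) : EReal)}
        {ω | X n ω = ((x2 n : ℝ) : EReal)} := by
      rw [Set.disjoint_left]
      intro ω h1 h2
      exact hn (h1.symm.trans h2)
    have hu : μ n ({ω | X n ω = ((x1 n : ℝ) : EReal)} ∪
        {ω | X n ω = ((x2 n : ℝ) : EReal)}) = 1 := by
      rw [measure_union hd (m2 n), hlaw1, hlaw2,
        ← ENNReal.ofReal_add (by linarith [(hp n).2]) (hp n).1.le]
      norm_num
    rw [measure_compl ((m1 n).union (m2 n)) (measure_ne_top _ _), hu, measure_univ, tsub_self]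
  -- lower bound on measure when an atom is in S
  have hge1 : ∀ (S : Set EReal) (n), ((x1 n : ℝ) : EReal) ∈ S →
      ENNReal.ofReal (1 - p n) ≤ μ n (X n ⁻¹' S) := by
    intro S n hmem
    rw [← hlaw1 n]
    exact measure_mono fun ω (h : X n ω = _) => by rw [Set.mem_preimage, h]; exact hmem
  have hge2 : ∀ (S : Set EReal) (n), ((x2 n : ℝ) : EReal) ∈ S →
      ENNReal.ofReal (p n) ≤ μ n (X n ⁻¹' S) := by
    intro S n hmem
    rw [← hlaw2 n]
    exact measure_mono fun ω (h : X n ω = _) => by rw [Set.mem_preimage, h]; exact hmem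
  -- upper bound when x1 ∉ S and complement is null
  have hle2 : ∀ (S : Set EReal) (n),
      μ n ({ω | X n ω = ((x1 n : ℝ) : EReal)} ∪ {ω | X n ω = ((x2 n : ℝ) : EReal)})ᶜ = 0 →
      ((x1 n : ℝ) : EReal) ∉ S → μ n (X n ⁻¹' S) ≤ ENNReal.ofReal (p n) := by
    intro S n h0 hnot
    have hsub : X n ⁻¹' S ⊆ {ω | X n ω = ((x2 n : ℝ) : EReal)} ∪
        ({ω | X n ω = ((x1 n : ℝ) : EReal)} ∪ {ω | X n ω = ((x2 n : ℝ) : EReal)})ᶜ := by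
      intro ω hω
      by_cases h2 : X n ω = ((x2 n : ℝ) : EReal)
      · exact Or.inl h2
      · refine Or.inr fun h => h.elim (fun h1 => hnot (h1 ▸ hω)) h2
    calc μ n (X n ⁻¹' S) ≤ μ n {ω | X n ω = ((x2 n : ℝ) : EReal)} +
          μ n ({ω | X n ω = ((x1 n : ℝ) : EReal)} ∪ {ω | X n ω = ((x2 n : ℝ) : EReal)})ᶜ :=
        le_trans (measure_mono hsub) (measure_union_le _ _)
      _ = ENNReal.ofReal (p n) := by rw [hlaw2, h0, add_zero]
  -- zero measure when both atoms outside S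
  have hzero : ∀ (S : Set EReal) (n),
      μ n ({ω | X n ω = ((x1 n : ℝ) : EReal)} ∪ {ω | X n ω = ((x2 n : ℝ) : EReal)})ᶜ = 0 →
      ((x1 n : ℝ) : EReal) ∉ S → ((x2 n : ℝ) : EReal) ∉ S → μ n (X n ⁻¹' S) = 0 := by
    intro S n h0 hn1 hn2
    refine measure_mono_null ?_ h0
    intro ω hω h
    exact h.elim (fun h1 => hn1 (h1 ▸ hω)) (fun h2 => hn2 (h2 ▸ hω))
  -- tendsto of (1/v) log(1-p) to 0
  have L1 : Tendsto (fun n => (((v n)⁻¹ : ℝ) : EReal) *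
      ENNReal.log (ENNReal.ofReal (1 - p n))) atTop (nhds 0) := by
    have hr : Tendsto (fun n => (v n)⁻¹ * Real.log (1 - p n)) atTop (nhds 0) := by
      have hl : Tendsto (fun n => Real.log (1 - p n)) atTop (nhds 0) := by
        have h1 : Tendsto (fun n => 1 - p n) atTop (nhds 1) := by
          simpa using tendsto_const_nhds.sub hp0
        simpa [Function.comp_def] using ((Real.continuousAt_log (by norm_num)).tendsto.comp h1)
      simpa using hvinf.inv_tendsto_atTop.mul hl
    have := EReal.tendsto_coe.2 hr
    refine this.congr fun n => ?_
    rw [ENNReal.log_ofReal_of_pos (by linarith [(hp n).2]), ← EReal.coe_mul]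
  -- tendsto of (1/v) log(p) to -c
  have L2 : Tendsto (fun n => (((v n)⁻¹ : ℝ) : EReal) *
      ENNReal.log (ENNReal.ofReal (p n))) atTop (nhds (-(c : EReal))) := by
    refine hpc.congr fun n => ?_
    rw [ENNReal.log_ofReal_of_pos (hp n).1, ← EReal.coe_mul, inv_mul_eq_div]
  have hxbne : xbar ≠ 0 := hxbar.ne'
  -- coercion tendsto for x1
  have hx1e : Tendsto (fun n => ((x1 n : ℝ) : EReal)) atTop (nhds (0 : EReal)) := by
    simpa using EReal.tendsto_coe.2 hx1
  constructor
  · -- lower bound, open sets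
    intro O hO
    by_cases h0 : (0 : EReal) ∈ O
    · have hinf : (⨅ x ∈ O, I x) = 0 :=
        le_antisymm (le_trans (iInf₂_le 0 h0) (by rw [hI]; simp)) (zero_le)
      rw [hinf]
      simp only [EReal.coe_ennreal_zero, neg_zero]
      have hev : ∀ᶠ n in atTop, (((v n)⁻¹ : ℝ) : EReal) *
          ENNReal.log (ENNReal.ofReal (1 - p n)) ≤ (((v n)⁻¹ : ℝ) : EReal) *
          ENNReal.log (μ n (X n ⁻¹' O)) := by
        filter_upwards [hx1e.eventually (hO.mem_nhds h0)] with n hn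
        exact mul_le_mul_of_nonneg_left (ENNReal.log_monotone (hge1 O n hn)) (hinvnn n)
      calc (0 : EReal) = liminf (fun n => (((v n)⁻¹ : ℝ) : EReal) *
            ENNReal.log (ENNReal.ofReal (1 - p n))) atTop := L1.liminf_eq.symm
        _ ≤ _ := liminf_le_liminf hev
    · by_cases hxb : xbar ∈ O
      · have hinf : (⨅ x ∈ O, I x) = c := by
          apply le_antisymm
          · exact le_trans (iInf₂_le xbar hxb) (by rw [hI, if_neg hxbne, if_pos rfl])
          · refine le_iInf₂ fun x hx => ?_
            rw [hI]
            split_ifs with h h'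
            · exact absurd (h ▸ hx) h0
            · exact le_rfl
            · exact le_top
        rw [hinf]
        have hev : ∀ᶠ n in atTop, (((v n)⁻¹ : ℝ) : EReal) *
            ENNReal.log (ENNReal.ofReal (p n)) ≤ (((v n)⁻¹ : ℝ) : EReal) *
            ENNReal.log (μ n (X n ⁻¹' O)) := by
          filter_upwards [hx2.eventually (hO.mem_nhds hxb)] with n hn
          exact mul_le_mul_of_nonneg_left (ENNReal.log_monotone (hge2 O n hn)) (hinvnn n)
        calc -((c : ℝ≥0∞) : EReal) = liminf (fun n => (((v n)⁻¹ : ℝ) : EReal) *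
              ENNReal.log (ENNReal.ofReal (p n))) atTop := L2.liminf_eq.symm
          _ ≤ _ := liminf_le_liminf hev
      · have hinf : (⨅ x ∈ O, I x) = ⊤ := by
          refine le_antisymm le_top (le_iInf₂ fun x hx => ?_)
          rw [hI]
          split_ifs with h h'
          · exact absurd (h ▸ hx) h0
          · exact absurd (h' ▸ hx) hxb
          · exact le_rfl
        rw [hinf]
        simp only [EReal.coe_ennreal_top, EReal.neg_top]
        exact bot_le
  · -- upper bound, closed sets
    intro C hC
    by_cases h0 : (0 : EReal) ∈ C
    · have hinf : (⨅ x ∈ C, I x) = 0 :=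
        le_antisymm (le_trans (iInf₂_le 0 h0) (by rw [hI]; simp)) (zero_le)
      rw [hinf]
      simp only [EReal.coe_ennreal_zero, neg_zero]
      refine limsup_le_of_le (by isBoundedDefault) (Eventually.of_forall fun n => ?_)
      have hlog : ENNReal.log (μ n (X n ⁻¹' C)) ≤ 0 := by
        have := hμ n
        simpa using ENNReal.log_monotone (prob_le_one (μ := μ n) (s := X n ⁻¹' C))
      calc (((v n)⁻¹ : ℝ) : EReal) * ENNReal.log (μ n (X n ⁻¹' C)) ≤
            (((v n)⁻¹ : ℝ) : EReal) * 0 := mul_le_mul_of_nonneg_left hlog (hinvnn n)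
        _ = 0 := mul_zero _
    · have hev1 : ∀ᶠ n in atTop, ((x1 n : ℝ) : EReal) ∉ C := by
        have : Cᶜ ∈ nhds (0 : EReal) := hC.isOpen_compl.mem_nhds h0
        exact hx1e.eventually this
      by_cases hxb : xbar ∈ C
      · have hinf : (⨅ x ∈ C, I x) = c := by
          apply le_antisymm
          · exact le_trans (iInf₂_le xbar hxb) (by rw [hI, if_neg hxbne, if_pos rfl])
          · refine le_iInf₂ fun x hx => ?_
            rw [hI]
            split_ifs with h h'
            · exact absurd (h ▸ hx) h0
            · exact le_rfl
            · exact le_top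
        rw [hinf]
        have hev : ∀ᶠ n in atTop, (((v n)⁻¹ : ℝ) : EReal) *
            ENNReal.log (μ n (X n ⁻¹' C)) ≤ (((v n)⁻¹ : ℝ) : EReal) *
            ENNReal.log (ENNReal.ofReal (p n)) := by
          filter_upwards [hnull, hev1] with n hn h1
          exact mul_le_mul_of_nonneg_left (ENNReal.log_monotone (hle2 C n hn h1)) (hinvnn n)
        calc limsup _ atTop ≤ limsup (fun n => (((v n)⁻¹ : ℝ) : EReal) *
              ENNReal.log (ENNReal.ofReal (p n))) atTop := limsup_le_limsup hev
          _ = -((c : ℝ≥0∞) : EReal) := L2.limsup_eq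
      · have hinf : (⨅ x ∈ C, I x) = ⊤ := by
          refine le_antisymm le_top (le_iInf₂ fun x hx => ?_)
          rw [hI]
          split_ifs with h h'
          · exact absurd (h ▸ hx) h0
          · exact absurd (h' ▸ hx) hxb
          · exact le_rfl
        rw [hinf]
        simp only [EReal.coe_ennreal_top, EReal.neg_top]
        have hev2 : ∀ᶠ n in atTop, ((x2 n : ℝ) : EReal) ∉ C :=
          hx2.eventually (hC.isOpen_compl.mem_nhds hxb)
        refine limsup_le_of_le (by isBoundedDefault) ?_
        filter_upwards [hnull, hev1, hev2] with n hn h1 h2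
        rw [hzero C n hn h1 h2, ENNReal.log_zero,
          EReal.coe_mul_bot_of_pos (inv_pos.2 (hv n))]
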